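/- Let n ≥ 1. Let s, ρ : ℝ → ℝ satisfy, on (0,∞): 0 < s(a) ≤ 1 and s antitone; ρ(a) ≥ 0 and ρ antitone. Let g : ℝ → ℝ satisfy 0 < g(t) < 1 for every t > 0, g antitone on (0,∞) and log∘g convex on (0,∞). Let α : Fin n → ℝ be a positive nondecreasing tuple, and let v, u : Fin n → ℝ be positive nondecreasing tuples with Σ_{i=1}^k v i ≤ Σ_{i=1}^k u i for every k = 1,…,n. Then Σ_{i=1}^n g(v i)·s(α i)·ρ(α i)/(1 − g(v i)·s(α i)) ≥ Σ_{i=1}^n g(u i)·s(α i)·ρ(α i)/(1 − g(u i)·s(α i)). -/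

import Mathlib

open Finset

/-- Sum of the first `k` entries of the tuple `a`. -/
noncomputable def prefixSum {n : ℕ} (a : Fin n → ℝ) (k : ℕ) : ℝ :=
  ∑ i ∈ Finset.univ.filter (fun i : Fin n => (i : ℕ) < k), a i


/-- Abel-summation type lemma. -/
theorem my_abel : ∀ (n : ℕ) (m d : ℕ → ℝ),
    (∀ i j, i ≤ j → j < n → d i ≠ 0 → d j ≠ 0 → m i ≤ m j) →
    (∀ i, i < n → d i ≠ 0 → m i ≤ 0) →
    (∀ k, 1 ≤ k → k ≤ n → ∑ i ∈ Finset.range k, d i ≤ 0) →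
    0 ≤ ∑ i ∈ Finset.range n, m i * d i := by
  intro n
  induction n with
  | zero => intro m d _ _ _; simp
  | succ n ih =>
    intro m d hmono hneg hpre
    by_cases hdn : d n = 0
    · rw [Finset.sum_range_succ, hdn, mul_zero, add_zero]
      exact ih m d (fun i j hij hj => hmono i j hij (hj.trans (Nat.lt_succ_self n)))
        (fun i hi => hneg i (hi.trans (Nat.lt_succ_self n)))
        (fun k h1 h2 => hpre k h1 (h2.trans (Nat.le_succ n)))
    · have hmn : m n ≤ 0 := hneg n (Nat.lt_succ_self n) hdn
      have hsplit : ∑ i ∈ Finset.range (n+1), m i * d i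
          = ∑ i ∈ Finset.range (n+1), (m i - m n) * d i
            + m n * ∑ i ∈ Finset.range (n+1), d i := by
        rw [Finset.mul_sum, ← Finset.sum_add_distrib]
        exact Finset.sum_congr rfl fun i _ => by ring
      rw [hsplit]
      have h2 : 0 ≤ m n * ∑ i ∈ Finset.range (n+1), d i := by
        have := hpre (n+1) (by omega) le_rfl
        nlinarith
      have h1 : 0 ≤ ∑ i ∈ Finset.range (n+1), (m i - m n) * d i := by
        rw [Finset.sum_range_succ, sub_self, zero_mul, add_zero]
        exact ih (fun i => m i - m n) d
          (fun i j hij hj hdi hdj => by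
            have := hmono i j hij (by omega) hdi hdj
            show m i - m n ≤ m j - m n
            linarith)
          (fun i hi hdi => by
            have := hmono i n (by omega) (Nat.lt_succ_self n) hdi hdn
            show m i - m n ≤ 0
            linarith)
          (fun k h1 h2 => hpre k h1 (by omega))
      linarith

theorem phi_mono {P R x y : ℝ} (hP : 0 < P) (hP1 : P ≤ 1) (hR : 0 ≤ R)
    (hx : 0 ≤ x) (hxy : x ≤ y) (hy1 : y < 1) :
    x * P * R / (1 - x * P) ≤ y * P * R / (1 - y * P) := by
  have hy0 : 0 ≤ y := hx.trans hxy
  have hyP : y * P < 1 := by nlinarith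
  have hnum : x * P * R ≤ y * P * R :=
    mul_le_mul_of_nonneg_right (by nlinarith) hR
  exact div_le_div₀ (by positivity) hnum (by linarith) (by nlinarith)

theorem phi_diff {P R x y : ℝ} (hx : x * P ≠ 1) (hy : y * P ≠ 1) :
    y * P * R / (1 - y * P) - x * P * R / (1 - x * P)
      = P * R * (y - x) / ((1 - x * P) * (1 - y * P)) := by
  have h1 : 1 - x * P ≠ 0 := fun h => hx (by linarith [sub_eq_zero.mp h])
  have h2 : 1 - y * P ≠ 0 := fun h => hy (by linarith [sub_eq_zero.mp h])
  rw [div_sub_div _ _ h2 h1, div_eq_div_iff (mul_ne_zero h2 h1) (mul_ne_zero h1 h2)]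
  ring

theorem phi_cross {P1 R1 P2 R2 x y : ℝ} (hP2 : 0 < P2) (hP12 : P2 ≤ P1) (hP1 : P1 ≤ 1)
    (hR2 : 0 ≤ R2) (hR12 : R2 ≤ R1) (hx : 0 < x) (hxy : x ≤ y) (hy1 : y < 1) :
    y * P2 * R2 / (1 - y * P2) - x * P2 * R2 / (1 - x * P2)
      ≤ y * P1 * R1 / (1 - y * P1) - x * P1 * R1 / (1 - x * P1) := by
  have hy0 : 0 < y := lt_of_lt_of_le hx hxy
  have hxP1 : x * P1 < 1 := by nlinarith
  have hyP1 : y * P1 < 1 := by nlinarith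
  have hxP2 : x * P2 < 1 := by nlinarith
  have hyP2 : y * P2 < 1 := by nlinarith
  rw [phi_diff (ne_of_lt hxP2) (ne_of_lt hyP2), phi_diff (ne_of_lt hxP1) (ne_of_lt hyP1)]
  have hd1 : 0 < (1 - x * P1) * (1 - y * P1) := by nlinarith
  have hP1pos : (0:ℝ) < P1 := lt_of_lt_of_le hP2 hP12
  have hR1 : (0:ℝ) ≤ R1 := hR2.trans hR12
  have hnum0 : (0:ℝ) ≤ P1 * R1 * (y - x) :=
    mul_nonneg (mul_nonneg hP1pos.le hR1) (by linarith)
  have hnum : P2 * R2 * (y - x) ≤ P1 * R1 * (y - x) :=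
    mul_le_mul_of_nonneg_right (mul_le_mul hP12 hR12 hR2 hP1pos.le) (by linarith)
  have hden : (1 - x * P1) * (1 - y * P1) ≤ (1 - x * P2) * (1 - y * P2) := by
    have h1 : x * P2 ≤ x * P1 := mul_le_mul_of_nonneg_left hP12 hx.le
    have h2 : y * P2 ≤ y * P1 := mul_le_mul_of_nonneg_left hP12 hy0.le
    exact mul_le_mul (by linarith) (by linarith) (by linarith) (by linarith)
  exact div_le_div₀ hnum0 hnum hd1 hden

theorem g_convex {g : ℝ → ℝ} (hgpos : ∀ t > 0, 0 < g t)
    (hlc : ConvexOn ℝ (Set.Ioi 0) (fun t => Real.log (g t))) :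
    ConvexOn ℝ (Set.Ioi (0:ℝ)) g := by
  refine ⟨convex_Ioi 0, fun x hx y hy a b ha hb hab => ?_⟩
  have hz : a • x + b • y ∈ Set.Ioi (0:ℝ) := (convex_Ioi 0) hx hy ha hb hab
  have h1 := hlc.2 hx hy ha hb hab
  calc g (a • x + b • y) = Real.exp (Real.log (g (a • x + b • y))) :=
        (Real.exp_log (hgpos _ hz)).symm
    _ ≤ Real.exp (a • Real.log (g x) + b • Real.log (g y)) := Real.exp_le_exp.2 h1
    _ ≤ a • Real.exp (Real.log (g x)) + b • Real.exp (Real.log (g y)) :=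
        convexOn_exp.2 (Set.mem_univ _) (Set.mem_univ _) ha hb hab
    _ = a • g x + b • g y := by
        rw [Real.exp_log (hgpos _ hx), Real.exp_log (hgpos _ hy)]

theorem phi_convexOn {P R : ℝ} (hP : 0 < P) (hP1 : P ≤ 1) (hR : 0 ≤ R) :
    ConvexOn ℝ (Set.Ioo (0:ℝ) 1) (fun x => x * P * R / (1 - x * P)) := by
  have hid : ∀ w : ℝ, w * P < 1 → w * P * R / (1 - w * P) = R * (1 - w * P)⁻¹ - R := by
    intro w hw
    have h : 1 - w * P ≠ 0 := by intro h; nlinarith [sub_eq_zero.mp h]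
    field_simp
    ring
  refine ⟨convex_Ioo 0 1, fun x hx y hy a b ha hb hab => ?_⟩
  obtain ⟨hx0, hx1⟩ := hx
  obtain ⟨hy0, hy1⟩ := hy
  have hz : a • x + b • y ∈ Set.Ioo (0:ℝ) 1 := (convex_Ioo 0 1) ⟨hx0, hx1⟩ ⟨hy0, hy1⟩ ha hb hab
  obtain ⟨hz0, hz1⟩ := hz
  have hxP : x * P < 1 := by nlinarith
  have hyP : y * P < 1 := by nlinarith
  have hzP : (a • x + b • y) * P < 1 := by
    simp only [smul_eq_mul] at hz1 ⊢; nlinarith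
  have hxd : (0:ℝ) < 1 - x * P := by linarith
  have hyd : (0:ℝ) < 1 - y * P := by linarith
  have key := (convexOn_zpow (𝕜 := ℝ) (-1)).2 (Set.mem_Ioi.2 hxd) (Set.mem_Ioi.2 hyd) ha hb hab
  simp only [zpow_neg_one, smul_eq_mul] at key
  have hcomb : a * (1 - x * P) + b * (1 - y * P) = 1 - (a * x + b * y) * P := by
    have : a + b = 1 := hab
    nlinarith [this]
  rw [hcomb] at key
  simp only [smul_eq_mul]
  rw [hid _ (by simpa [smul_eq_mul] using hzP), hid _ hxP, hid _ hyP]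
  simp only [smul_eq_mul] at hzP
  have key' := mul_le_mul_of_nonneg_left key hR
  have hab' : a + b = 1 := hab
  nlinarith [key']

theorem comp_convex {g : ℝ → ℝ} {P R : ℝ} (hgmem : ∀ t > 0, 0 < g t ∧ g t < 1)
    (hgconv : ConvexOn ℝ (Set.Ioi (0:ℝ)) g) (hP : 0 < P) (hP1 : P ≤ 1) (hR : 0 ≤ R) :
    ConvexOn ℝ (Set.Ioi (0:ℝ)) (fun t => g t * P * R / (1 - g t * P)) := by
  refine ⟨convex_Ioi 0, fun x hx y hy a b ha hb hab => ?_⟩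
  have hz : a • x + b • y ∈ Set.Ioi (0:ℝ) := (convex_Ioi 0) hx hy ha hb hab
  obtain ⟨hgx0, hgx1⟩ := hgmem x hx
  obtain ⟨hgy0, hgy1⟩ := hgmem y hy
  obtain ⟨hgz0, hgz1⟩ := hgmem _ hz
  have hcomb : a • g x + b • g y ∈ Set.Ioo (0:ℝ) 1 :=
    (convex_Ioo 0 1) ⟨hgx0, hgx1⟩ ⟨hgy0, hgy1⟩ ha hb hab
  have step1 : g (a • x + b • y) * P * R / (1 - g (a • x + b • y) * P)
      ≤ (a • g x + b • g y) * P * R / (1 - (a • g x + b • g y) * P) :=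
    phi_mono hP hP1 hR hgz0.le (hgconv.2 hx hy ha hb hab) hcomb.2
  have step2 := (phi_convexOn hP hP1 hR).2
    (Set.mem_Ioo.2 ⟨hgx0, hgx1⟩) (Set.mem_Ioo.2 ⟨hgy0, hgy1⟩) ha hb hab
  exact step1.trans step2

theorem prefix_eq {n : ℕ} (a : Fin n → ℝ) (k : ℕ) (hk : k ≤ n) :
    prefixSum a k = ∑ i ∈ Finset.range k, (if h : i < n then a ⟨i, h⟩ else 0) := by
  unfold prefixSum
  rw [Finset.sum_filter]
  have h1 : (∑ i : Fin n, if (i : ℕ) < k then a i else 0)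
      = ∑ j ∈ Finset.range n,
          (fun j => if j < k then (if h : j < n then a ⟨j, h⟩ else 0) else 0) j := by
    rw [← Fin.sum_univ_eq_sum_range]
    exact Finset.sum_congr rfl fun i _ => by simp [i.isLt]
  rw [h1, ← Finset.sum_filter]
  have h2 : (Finset.range n).filter (fun j => j < k) = Finset.range k := by
    ext j
    simp only [Finset.mem_filter, Finset.mem_range]
    exact ⟨fun h => h.2, fun h => ⟨lt_of_lt_of_le h hk, h⟩⟩
  rw [h2]

/-- Theorem 3.12: largest claim amounts, reversed hazard rate order,
weak supermajorization of the transformed occurrence probabilities. -/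
theorem stmt_13 {n : ℕ} (hn : 1 ≤ n) (s ρ g : ℝ → ℝ)
    (hs_pos : ∀ a > 0, 0 < s a) (hs_le : ∀ a > 0, s a ≤ 1)
    (hs_anti : AntitoneOn s (Set.Ioi 0))
    (hρ_nonneg : ∀ a > 0, 0 ≤ ρ a)
    (hρ_anti : AntitoneOn ρ (Set.Ioi 0))
    (hg : ∀ t > 0, 0 < g t ∧ g t < 1)
    (hg_anti : AntitoneOn g (Set.Ioi 0))
    (hg_logconv : ConvexOn ℝ (Set.Ioi 0) (fun t => Real.log (g t)))
    (α v u : Fin n → ℝ)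
    (hα : ∀ i, 0 < α i) (hαm : Monotone α)
    (hv : ∀ i, 0 < v i) (hu : ∀ i, 0 < u i)
    (hvm : Monotone v) (hum : Monotone u)
    (hmaj : ∀ k, 1 ≤ k → k ≤ n → prefixSum v k ≤ prefixSum u k) :
    ∑ i, g (u i) * s (α i) * ρ (α i) / (1 - g (u i) * s (α i)) ≤
      ∑ i, g (v i) * s (α i) * ρ (α i) / (1 - g (v i) * s (α i)) := by
  classical
  have hP : ∀ i : Fin n, 0 < s (α i) := fun i => hs_pos _ (hα i)
  have hP1 : ∀ i : Fin n, s (α i) ≤ 1 := fun i => hs_le _ (hα i)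
  have hR : ∀ i : Fin n, 0 ≤ ρ (α i) := fun i => hρ_nonneg _ (hα i)
  set fi : Fin n → ℝ → ℝ :=
    fun i t => g t * s (α i) * ρ (α i) / (1 - g t * s (α i)) with hfi
  have hgconv : ConvexOn ℝ (Set.Ioi (0:ℝ)) g := g_convex (fun t ht => (hg t ht).1) hg_logconv
  have hconv : ∀ i : Fin n, ConvexOn ℝ (Set.Ioi (0:ℝ)) (fi i) := by
    intro i
    simp only [hfi]
    exact comp_convex hg hgconv (hP i) (hP1 i) (hR i)
  have hanti : ∀ (i : Fin n) (t1 t2 : ℝ), 0 < t1 → t1 ≤ t2 → fi i t2 ≤ fi i t1 := by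
    intro i t1 t2 h1 h12
    have h2 : (0:ℝ) < t2 := lt_of_lt_of_le h1 h12
    simp only [hfi]
    exact phi_mono (hP i) (hP1 i) (hR i) (hg t2 h2).1.le
      (hg_anti (Set.mem_Ioi.2 h1) (Set.mem_Ioi.2 h2) h12) (hg t1 h1).2
  set mm : Fin n → ℝ := fun i =>
    (fi i (max (v i) (u i)) - fi i (min (v i) (u i)))
      / (max (v i) (u i) - min (v i) (u i)) with hmmdef
  -- monotonicity of the slopes
  have mm_mono : ∀ I J : Fin n, I ≤ J → v I ≠ u I → v J ≠ u J → mm I ≤ mm J := by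
    intro I J hIJ hneI hneJ
    simp only [hmmdef]
    set aI := min (v I) (u I) with haIdef
    set bI := max (v I) (u I) with hbIdef
    set aJ := min (v J) (u J) with haJdef
    set bJ := max (v J) (u J) with hbJdef
    have haI : (0:ℝ) < aI := lt_min (hv I) (hu I)
    have haJ : (0:ℝ) < aJ := lt_min (hv J) (hu J)
    have hab_I : aI < bI := min_lt_max.2 hneI
    have hab_J : aJ < bJ := min_lt_max.2 hneJ
    have haa : aI ≤ aJ := min_le_min (hvm hIJ) (hum hIJ)
    have hbb : bI ≤ bJ := max_le_max (hvm hIJ) (hum hIJ)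
    have hbI : (0:ℝ) < bI := haI.trans hab_I
    have hbJ : (0:ℝ) < bJ := haJ.trans hab_J
    have hsA : fi I bI - fi I aI ≤ fi J bI - fi J aI := by
      have hgb : 0 < g bI := (hg bI hbI).1
      have hga1 : g aI < 1 := (hg aI haI).2
      have hgle : g bI ≤ g aI :=
        hg_anti (Set.mem_Ioi.2 haI) (Set.mem_Ioi.2 hbI) hab_I.le
      have hPle : s (α J) ≤ s (α I) :=
        hs_anti (Set.mem_Ioi.2 (hα I)) (Set.mem_Ioi.2 (hα J)) (hαm hIJ)
      have hRle : ρ (α J) ≤ ρ (α I) :=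
        hρ_anti (Set.mem_Ioi.2 (hα I)) (Set.mem_Ioi.2 (hα J)) (hαm hIJ)
      have hkey := phi_cross (hP J) hPle (hP1 I) (hR J) hRle hgb hgle hga1
      simp only [hfi]
      linarith [hkey]
    have hA : (fi I bI - fi I aI) / (bI - aI) ≤ (fi J bI - fi J aI) / (bI - aI) :=
      (div_le_div_iff_of_pos_right (by linarith)).2 hsA
    have hB : (fi J bI - fi J aI) / (bI - aI) ≤ (fi J bJ - fi J aI) / (bJ - aI) :=
      (hconv J).secant_mono (Set.mem_Ioi.2 haI) (Set.mem_Ioi.2 hbI) (Set.mem_Ioi.2 hbJ)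
        (ne_of_gt hab_I) (ne_of_gt (lt_of_lt_of_le hab_I hbb)) hbb
    have hC : (fi J bJ - fi J aI) / (bJ - aI) ≤ (fi J bJ - fi J aJ) / (bJ - aJ) := by
      have h := (hconv J).secant_mono (a := bJ) (Set.mem_Ioi.2 hbJ) (Set.mem_Ioi.2 haI)
        (Set.mem_Ioi.2 haJ) (ne_of_lt (lt_of_le_of_lt haa hab_J)) (ne_of_lt hab_J) haa
      have hlt : aI < bJ := lt_of_le_of_lt haa hab_J
      have hne1 : aI - bJ ≠ 0 := sub_ne_zero.2 (ne_of_lt hlt)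
      have hne1' : bJ - aI ≠ 0 := sub_ne_zero.2 (ne_of_gt hlt)
      have hne2 : aJ - bJ ≠ 0 := sub_ne_zero.2 (ne_of_lt hab_J)
      have hne2' : bJ - aJ ≠ 0 := sub_ne_zero.2 (ne_of_gt hab_J)
      have e1 : (fi J aI - fi J bJ) / (aI - bJ) = (fi J bJ - fi J aI) / (bJ - aI) := by
        rw [div_eq_div_iff hne1 hne1']; ring
      have e2 : (fi J aJ - fi J bJ) / (aJ - bJ) = (fi J bJ - fi J aJ) / (bJ - aJ) := by
        rw [div_eq_div_iff hne2 hne2']; ring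
      rw [← e1, ← e2]
      exact h
    exact hA.trans (hB.trans hC)
  set d : ℕ → ℝ := fun i => if h : i < n then v ⟨i, h⟩ - u ⟨i, h⟩ else 0 with hddef
  set m : ℕ → ℝ := fun i => if h : i < n then mm ⟨i, h⟩ else 0 with hmdef
  have hmono : ∀ i j, i ≤ j → j < n → d i ≠ 0 → d j ≠ 0 → m i ≤ m j := by
    intro i j hij hjn hdi hdj
    have hin : i < n := lt_of_le_of_lt hij hjn
    simp only [hddef, dif_pos hin, dif_pos hjn] at hdi hdj
    simp only [hmdef, dif_pos hin, dif_pos hjn]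
    exact mm_mono ⟨i, hin⟩ ⟨j, hjn⟩ hij (sub_ne_zero.1 hdi) (sub_ne_zero.1 hdj)
  have hneg : ∀ i, i < n → d i ≠ 0 → m i ≤ 0 := by
    intro i hin hdi
    simp only [hddef, dif_pos hin] at hdi
    simp only [hmdef, dif_pos hin, hmmdef]
    set I : Fin n := ⟨i, hin⟩
    have hne : v I ≠ u I := sub_ne_zero.1 hdi
    have haI : (0:ℝ) < min (v I) (u I) := lt_min (hv I) (hu I)
    have hab : min (v I) (u I) < max (v I) (u I) := min_lt_max.2 hne
    have hnum : fi I (max (v I) (u I)) - fi I (min (v I) (u I)) ≤ 0 := by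
      have := hanti I (min (v I) (u I)) (max (v I) (u I)) haI hab.le
      linarith
    exact div_nonpos_iff.2 (Or.inr ⟨hnum, by linarith⟩)
  have hpre : ∀ k, 1 ≤ k → k ≤ n → ∑ i ∈ Finset.range k, d i ≤ 0 := by
    intro k h1 h2
    have hm := hmaj k h1 h2
    rw [prefix_eq v k h2, prefix_eq u k h2] at hm
    have hsum : ∑ i ∈ Finset.range k, d i
        = (∑ i ∈ Finset.range k, (if h : i < n then v ⟨i, h⟩ else 0))
          - ∑ i ∈ Finset.range k, (if h : i < n then u ⟨i, h⟩ else 0) := by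
      rw [← Finset.sum_sub_distrib]
      refine Finset.sum_congr rfl fun i _ => ?_
      by_cases h : i < n <;> simp [hddef, h]
    rw [hsum]
    linarith
  have habel : 0 ≤ ∑ i ∈ Finset.range n, m i * d i := my_abel n m d hmono hneg hpre
  rw [← Fin.sum_univ_eq_sum_range (fun k => m k * d k) n] at habel
  rw [← sub_nonneg, ← Finset.sum_sub_distrib]
  refine le_of_le_of_eq habel (Finset.sum_congr rfl fun i _ => ?_)
  simp only [hmdef, hddef, dif_pos i.isLt, Fin.eta]
  show mm i * (v i - u i) = _
  rcases lt_trichotomy (v i) (u i) with h | h | h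
  · have h0 : u i - v i ≠ 0 := sub_ne_zero.2 (ne_of_gt h)
    rw [hmmdef]
    simp only [max_eq_right h.le, min_eq_left h.le]
    field_simp
    ring
  · simp [hmmdef, h]
  · have h0 : v i - u i ≠ 0 := sub_ne_zero.2 (ne_of_gt h)
    rw [hmmdef]
    simp only [max_eq_left h.le, min_eq_right h.le]
    field_simp
    simp only [hfi]
    ring
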